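/- arXiv:1111.6444 — 5 statements merged into one kernel-verified Lean document; each statement's English description precedes it below -/
import Mathlib

section
/- Let A ⊆ 2^ω be upward closed (u ∈ A and u ⊆ v implies v ∈ A). Then A is meager if and only if there exist successive finite subsets I_0 < I_1 < I_2 < ⋯ of ω such that every u ∈ A satisfies: {n : u ∩ I_n = ∅} is finite. -/
/-- Forcing into a dense open set with a finite condition. -/
lemma forcing_step (G : Set (ℕ → Bool)) (hGo : IsOpen G) (hGd : Dense G)
    (F : Finset ℕ) (t : ℕ → Bool) :
    ∃ (F' : Finset ℕ) (t' : ℕ → Bool), (∀ i ∈ F, t' i = t i) ∧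
      ∀ u : ℕ → Bool, (∀ i ∈ F', u i = t' i) → u ∈ G := by
  classical
  set C : Set (ℕ → Bool) := {u | ∀ i ∈ F, u i = t i} with hC
  have hCopen : IsOpen C := by
    have : C = ⋂ i ∈ F, (fun u : ℕ → Bool => u i) ⁻¹' {t i} := by
      ext u; simp [hC]
    rw [this]
    exact isOpen_biInter_finset fun i _ =>
      (continuous_apply i).isOpen_preimage _ (isOpen_discrete _)
  have hne : C.Nonempty := ⟨t, fun i _ => rfl⟩
  obtain ⟨u, huC, huG⟩ := hGd.inter_open_nonempty C hCopen hne
  obtain ⟨I, usets, hIu, hpi⟩ := isOpen_pi_iff.mp hGo u huG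
  refine ⟨I, u, fun i hi => huC i hi, fun v hv => ?_⟩
  apply hpi
  intro i hi
  have := hv i hi
  rw [this]
  exact (hIu i hi).2

/-- Uniform forcing: a single block of coordinates `[b, c)` forcing into `G`
regardless of the values below `b`. -/
lemma forcing_all (G : Set (ℕ → Bool)) (hGo : IsOpen G) (hGd : Dense G) (b : ℕ) :
    ∃ c, b ≤ c ∧ ∃ τ : ℕ → Bool, ∀ u : ℕ → Bool,
      (∀ i, b ≤ i → i < c → u i = τ i) → u ∈ G := by
  classical
  have key : ∀ S : Finset (Fin b → Bool), ∃ c, b ≤ c ∧ ∃ τ : ℕ → Bool,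
      ∀ s ∈ S, ∀ u : ℕ → Bool, (∀ i : Fin b, u i = s i) →
        (∀ i, b ≤ i → i < c → u i = τ i) → u ∈ G := by
    intro S
    induction S using Finset.induction_on with
    | empty => exact ⟨b, le_rfl, fun _ => true, fun s hs => absurd hs (Finset.notMem_empty s)⟩
    | @insert s0 S hs0 ih =>
      obtain ⟨c, hbc, τ, hτ⟩ := ih
      obtain ⟨F', t', hagree, hforce⟩ := forcing_step G hGo hGd (Finset.range c)
        (fun i => if h : i < b then s0 ⟨i, h⟩ else τ i)
      refine ⟨max c (F'.sup id + 1), le_trans hbc (le_max_left _ _), t', ?_⟩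
      intro s hs u hub hmid
      rcases Finset.mem_insert.mp hs with h | h
      · subst h
        apply hforce
        intro i hi
        have hic' : i < max c (F'.sup id + 1) :=
          lt_of_le_of_lt (Finset.le_sup (f := id) hi)
            (lt_of_lt_of_le (Nat.lt_succ_self _) (le_max_right _ _))
        by_cases hib : i < b
        · have := hagree i (Finset.mem_range.mpr (lt_of_lt_of_le hib hbc))
          rw [this, dif_pos hib, hub ⟨i, hib⟩]
        · exact hmid i (le_of_not_gt hib) hic'
      · refine hτ s h u (fun i => hub i) ?_
        intro i hbi hic
        have := hagree i (Finset.mem_range.mpr hic)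
        rw [hmid i hbi (lt_of_lt_of_le hic (le_max_left _ _)), this, dif_neg (not_lt.mpr hbi)]
  obtain ⟨c, hbc, τ, hτ⟩ := key Finset.univ
  exact ⟨c, hbc, τ, fun u hmid =>
    hτ (fun i : Fin b => u i) (Finset.mem_univ _) u (fun i => rfl) hmid⟩

/-- An upward closed subset `A` of Cantor space is meager iff there exist successive
finite sets `I n` such that every `u ∈ A` meets all but finitely many of the `I n`. -/
theorem stmt_8 (A : Set (ℕ → Bool))
    (hup : ∀ u v : ℕ → Bool, u ∈ A → (∀ n, u n = true → v n = true) → v ∈ A) :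
    IsMeagre A ↔
      ∃ I : ℕ → Finset ℕ,
        (∀ n, (I n).Nonempty) ∧
        (∀ n, ∀ i ∈ I n, ∀ j ∈ I (n + 1), i < j) ∧
        ∀ u ∈ A, {n : ℕ | ∀ m ∈ I n, u m = false}.Finite := by
  classical
  constructor
  · -- Forward: meager → intervals
    intro hA
    obtain ⟨S, hSnwd, hScnt, hScov⟩ := isMeagre_iff_countable_union_isNowhereDense.mp hA
    obtain ⟨f, hf⟩ := (hScnt.insert ∅).exists_eq_range (Set.insert_nonempty _ _)
    have hfnwd : ∀ n, IsNowhereDense (f n) := by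
      intro n
      have : f n ∈ insert (∅ : Set (ℕ → Bool)) S := hf ▸ Set.mem_range_self n
      rcases this with h | h
      · rw [h]; exact isNowhereDense_empty
      · exact hSnwd _ h
    have hcov : A ⊆ ⋃ n, f n := by
      intro u hu
      obtain ⟨s, hsS, hus⟩ := hScov hu
      have : s ∈ Set.range f := hf ▸ Set.mem_insert_of_mem _ hsS
      obtain ⟨n, rfl⟩ := this
      exact Set.mem_iUnion.mpr ⟨n, hus⟩
    set g : ℕ → Set (ℕ → Bool) := fun n => ⋂ j ∈ Finset.range (n+1), (closure (f j))ᶜ with hg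
    have hgopen : ∀ n, IsOpen (g n) :=
      fun n => isOpen_biInter_finset fun j _ => isClosed_closure.isOpen_compl
    have hfdense : ∀ j, Dense (closure (f j))ᶜ := fun j =>
      interior_eq_empty_iff_dense_compl.mp (hfnwd j)
    have hgsplit : ∀ n, g (n+1) = (closure (f (n+1)))ᶜ ∩ g n := by
      intro n
      rw [hg]
      simp only [Finset.range_add_one (n := n+1)]
      rw [Finset.set_biInter_insert]
    have hgdense : ∀ n, Dense (g n) := by
      intro n
      induction n with
      | zero => simpa [hg] using hfdense 0
      | succ n ih =>
        rw [hgsplit n]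
        exact (hfdense (n+1)).inter_of_isOpen_left ih isClosed_closure.isOpen_compl
    have hgsub : ∀ n j, j ≤ n → g n ⊆ (f j)ᶜ := by
      intro n j hj x hx
      have : x ∈ (closure (f j))ᶜ := by
        have := Set.mem_iInter₂.mp hx j (Finset.mem_range.mpr (Nat.lt_succ_of_le hj))
        exact this
      exact fun hxf => this (subset_closure hxf)
    have H : ∀ n b, ∃ c, b ≤ c ∧ ∃ τ : ℕ → Bool, ∀ u : ℕ → Bool,
        (∀ i, b ≤ i → i < c → u i = τ i) → u ∈ g n :=
      fun n b => forcing_all (g n) (hgopen n) (hgdense n) b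
    choose cf hcf τf hτf using H
    set a : ℕ → ℕ := fun n => Nat.rec 0 (fun k ih => max (cf k ih) (ih + 1)) n with ha
    have haS : ∀ n, a (n+1) = max (cf n (a n)) (a n + 1) := fun n => rfl
    have halt : ∀ n, a n < a (n+1) := fun n =>
      lt_of_lt_of_le (Nat.lt_succ_self _) ((haS n) ▸ le_max_right _ _)
    have hamono : StrictMono a := strictMono_nat_of_lt_succ halt
    refine ⟨fun n => Finset.Ico (a n) (a (n+1)), fun n => Finset.nonempty_Ico.mpr (halt n),
      ?_, ?_⟩
    · intro n i hi j hj
      rw [Finset.mem_Ico] at hi hj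
      exact lt_of_lt_of_le hi.2 hj.1
    · intro u huA
      by_contra hfin
      have hinf : {n | ∀ m ∈ Finset.Ico (a n) (a (n+1)), u m = false}.Infinite := hfin
      set Sm := {n | ∀ m ∈ Finset.Ico (a n) (a (n+1)), u m = false} with hSm
      set y : ℕ → Bool := fun m =>
        if h : ∃ n, n ∈ Sm ∧ a n ≤ m ∧ m < a (n+1) then τf h.choose (a h.choose) m else u m
        with hy
      have huniq : ∀ m n, n ∈ Sm → a n ≤ m → m < a (n+1) → y m = τf n (a n) m := by
        intro m n hn h1 h2
        have hex : ∃ k, k ∈ Sm ∧ a k ≤ m ∧ m < a (k+1) := ⟨n, hn, h1, h2⟩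
        have hspec := hex.choose_spec
        have heq : hex.choose = n := by
          by_contra hne
          rcases lt_or_gt_of_ne hne with h | h
          · exact absurd (lt_of_lt_of_le hspec.2.2 (hamono.monotone (Nat.succ_le_of_lt h)))
              (not_lt.mpr h1)
          · exact absurd (lt_of_lt_of_le h2 (hamono.monotone (Nat.succ_le_of_lt h)))
              (not_lt.mpr hspec.2.1)
        rw [hy]
        simp only [dif_pos hex]
        rw [heq]
      have hle : ∀ m, u m = true → y m = true := by
        intro m hm
        rw [hy]
        by_cases h : ∃ n, n ∈ Sm ∧ a n ≤ m ∧ m < a (n+1)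
        · exfalso
          have hsp := h.choose_spec
          have : u m = false := hsp.1 m (Finset.mem_Ico.mpr ⟨hsp.2.1, hsp.2.2⟩)
          rw [this] at hm; exact Bool.false_ne_true hm
        · simp only [dif_neg h]; exact hm
      have hyA : y ∈ A := hup u y huA hle
      obtain ⟨j, hjU⟩ := Set.mem_iUnion.mp (hcov hyA)
      obtain ⟨n, hnSm, hjn⟩ := hinf.exists_gt j
      have hyg : y ∈ g n := by
        apply hτf n (a n) y
        intro i h1 h2
        have h2' : i < a (n+1) := lt_of_lt_of_le h2 ((haS n) ▸ le_max_left _ _)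
        exact huniq i n hnSm h1 h2'
      exact hgsub n j (le_of_lt hjn) hyg hjU
  · -- Reverse: intervals → meager
    rintro ⟨I, hIne, hsucc, hmeet⟩
    have hmono : ∀ n, ∀ i ∈ I n, n ≤ i := by
      intro n
      induction n with
      | zero => exact fun i _ => Nat.zero_le i
      | succ n ih =>
        intro i hi
        obtain ⟨j, hj⟩ := hIne n
        exact Nat.succ_le_of_lt (lt_of_le_of_lt (ih j hj) (hsucc n j hj i hi))
    set C : ℕ → Set (ℕ → Bool) := fun k => {u | ∀ n, k ≤ n → ∃ m ∈ I n, u m = true} with hC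
    rw [isMeagre_iff_countable_union_isNowhereDense]
    refine ⟨Set.range C, ?_, Set.countable_range C, ?_⟩
    · rintro t ⟨k, rfl⟩
      have hclosed : IsClosed (C k) := by
        have : C k = ⋂ n, ⋂ (_ : k ≤ n), ⋃ m ∈ (I n : Set ℕ), {u : ℕ → Bool | u m = true} := by
          ext u; simp [hC]
        rw [this]
        refine isClosed_iInter fun n => isClosed_iInter fun _ => ?_
        refine (I n).finite_toSet.isClosed_biUnion fun m _ => ?_
        have : {u : ℕ → Bool | u m = true} = (fun u : ℕ → Bool => u m) ⁻¹' {true} := rfl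
        rw [this]
        exact IsClosed.preimage (continuous_apply m) isClosed_singleton
      rw [hclosed.isNowhereDense_iff, Set.eq_empty_iff_forall_notMem]
      intro u hu
      obtain ⟨J, usets, hJ, hpi⟩ := isOpen_pi_iff.mp isOpen_interior u hu
      set v : ℕ → Bool := fun i => if i ∈ J then u i else false with hv
      have hvC : v ∈ C k := by
        apply interior_subset
        apply hpi
        intro i hi
        have : v i = u i := by rw [hv]; simp only [if_pos (Finset.mem_coe.mp hi)]
        rw [this]
        exact (hJ i hi).2
      set n := k + (J.sup id) + 1 with hn
      obtain ⟨m, hmI, hmt⟩ := hvC n (by omega)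
      have hmn : n ≤ m := hmono n m hmI
      have hmJ : m ∉ J := by
        intro hmJ
        have : m ≤ J.sup id := Finset.le_sup (f := id) hmJ
        omega
      have : v m = false := by rw [hv]; simp only [if_neg hmJ]
      rw [this] at hmt
      exact Bool.false_ne_true hmt
    · intro u huA
      obtain ⟨k, hk⟩ := (hmeet u huA).bddAbove
      refine Set.mem_sUnion.mpr ⟨C (k+1), ⟨k+1, rfl⟩, ?_⟩
      intro n hn
      by_contra hno
      push_neg at hno
      have : n ∈ {n : ℕ | ∀ m ∈ I n, u m = false} := by
        intro m hm
        have := hno m hm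
        exact Bool.not_eq_true _ ▸ (by simpa using this)
      have := hk this
      omega
end

section
/- Let A ⊆ 2^ω be upward closed (u ∈ A and u ⊆ v implies v ∈ A). Then A is comeager if and only if there exist successive finite subsets I_0 < I_1 < I_2 < ⋯ of ω such that every u ∈ 2^ω containing infinitely many of the sets I_n belongs to A. -/
open Set

namespace Stmt9Aux

lemma cylinder_open (m : ℕ) (s : ℕ → Bool) :
    IsOpen {w : ℕ → Bool | ∀ i < m, w i = s i} := by
  have h : {w : ℕ → Bool | ∀ i < m, w i = s i}
      = Set.pi (Set.Iio m) (fun i => {s i}) := by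
    ext w; simp [Set.mem_pi]
  rw [h]
  exact isOpen_set_pi (Set.finite_Iio m) (fun a _ => isOpen_discrete _)

lemma cylinder_subset_of_isOpen {D : Set (ℕ → Bool)} (hD : IsOpen D) {x : ℕ → Bool}
    (hx : x ∈ D) : ∃ N, ∀ w : ℕ → Bool, (∀ i < N, w i = x i) → w ∈ D := by
  rcases isOpen_pi_iff.1 hD x hx with ⟨J, u, h1, h2⟩
  refine ⟨J.sup id + 1, fun w hw => h2 ?_⟩
  intro a ha
  have haJ : a ∈ J := ha
  have : w a = x a := hw a (Nat.lt_succ_of_le (Finset.le_sup (f := id) haJ))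
  rw [this]
  exact (h1 a haJ).2

lemma force {D : Set (ℕ → Bool)} (hDo : IsOpen D) (hDd : Dense D) (m : ℕ) (s : ℕ → Bool) :
    ∃ p : (ℕ → Bool) × ℕ, (∀ i < m, p.1 i = s i) ∧
      ∀ w : ℕ → Bool, (∀ i < p.2, w i = p.1 i) → w ∈ D := by
  have hV : IsOpen {w : ℕ → Bool | ∀ i < m, w i = s i} := cylinder_open m s
  have hVne : {w : ℕ → Bool | ∀ i < m, w i = s i}.Nonempty := ⟨s, fun i _ => rfl⟩
  obtain ⟨x, hxD, hxV⟩ := hDd.exists_mem_open hV hVne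
  obtain ⟨N, hN⟩ := cylinder_subset_of_isOpen hDo hxD
  exact ⟨(x, N), hxV, hN⟩

lemma exists_sel {D : ℕ → Set (ℕ → Bool)} (hDo : ∀ n, IsOpen (D n))
    (hDd : ∀ n, Dense (D n)) :
    ∃ (m : ℕ → ℕ) (sel : ℕ → (ℕ → Bool) → (ℕ → Bool)),
      (∀ n, m n < m (n + 1)) ∧
      ∀ n s, (∀ i < m n, sel n s i = s i) ∧
        ∀ w : ℕ → Bool, (∀ i < m (n + 1), w i = sel n s i) → w ∈ D n := by
  have H : ∀ (n b : ℕ) (s : ℕ → Bool), ∃ p : (ℕ → Bool) × ℕ,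
      (∀ i < b, p.1 i = s i) ∧ ∀ w : ℕ → Bool, (∀ i < p.2, w i = p.1 i) → w ∈ D n :=
    fun n b s => force (hDo n) (hDd n) b s
  choose F h1 h2 using H
  -- truncation
  set trunc : ℕ → (ℕ → Bool) → (ℕ → Bool) :=
    fun b s i => if h : i < b then s i else false with htrunc
  set Nmax : ℕ → ℕ → ℕ := fun n b =>
    (Finset.univ : Finset (Fin b → Bool)).sup
      (fun t => (F n b (fun i => if h : i < b then t ⟨i, h⟩ else false)).2) with hNmax
  set m : ℕ → ℕ := fun k => Nat.rec 0 (fun n b => max (Nmax n b) (b + 1)) k with hm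
  have hmsucc : ∀ n, m (n + 1) = max (Nmax n (m n)) (m n + 1) := fun n => rfl
  refine ⟨m, fun n s => (F n (m n) (trunc (m n) s)).1, ?_, ?_⟩
  · intro n
    rw [hmsucc]
    exact lt_of_lt_of_le (Nat.lt_succ_self _) (le_max_right _ _)
  · intro n s
    constructor
    · intro i hi
      show (F n (m n) (trunc (m n) s)).1 i = s i
      rw [h1 n (m n) (trunc (m n) s) i hi]
      simp [htrunc, hi]
    · intro w hw
      have key : trunc (m n) s = fun i => if h : i < m n then (fun j : Fin (m n) => s j) ⟨i, h⟩ else false := by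
        funext i; simp [htrunc]
      have hle : (F n (m n) (trunc (m n) s)).2 ≤ m (n + 1) := by
        rw [hmsucc]
        refine le_trans ?_ (le_max_left _ _)
        rw [key]
        show _ ≤ Nmax n (m n)
        rw [hNmax]
        exact Finset.le_sup (f := fun t : Fin (m n) → Bool =>
          (F n (m n) (fun i => if h : i < m n then t ⟨i, h⟩ else false)).2)
          (Finset.mem_univ (fun j : Fin (m n) => s j))
      exact h2 n (m n) (trunc (m n) s) w (fun i hi => hw i (lt_of_lt_of_le hi hle))

lemma dense_biInter_finset {f : ℕ → Set (ℕ → Bool)} (hfo : ∀ n, IsOpen (f n))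
    (hfd : ∀ n, Dense (f n)) (s : Finset ℕ) : Dense (⋂ i ∈ s, f i) := by
  classical
  induction s using Finset.induction with
  | empty => simp [dense_univ]
  | @insert a s' ha ih =>
    rw [Finset.set_biInter_insert]
    exact (hfd a).inter_of_isOpen_left ih (hfo a)

end Stmt9Aux

open Stmt9Aux

/-- An upward closed subset `A` of Cantor space is comeager iff there exist successive
finite sets `I n` such that every `u` containing infinitely many `I n` belongs to `A`. -/
theorem stmt_9 (A : Set (ℕ → Bool))
    (hup : ∀ u v : ℕ → Bool, u ∈ A → (∀ n, u n = true → v n = true) → v ∈ A) :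
    IsMeagre Aᶜ ↔
      ∃ I : ℕ → Finset ℕ,
        (∀ n, (I n).Nonempty) ∧
        (∀ n, ∀ i ∈ I n, ∀ j ∈ I (n + 1), i < j) ∧
        ∀ u : ℕ → Bool, {n : ℕ | ∀ m ∈ I n, u m = true}.Infinite → u ∈ A := by
  classical
  rw [IsMeagre, compl_compl]
  constructor
  · -- forward direction
    intro h
    obtain ⟨S, hSo, hSd, hSc, hSA⟩ := mem_residual_iff.1 h
    -- turn S into a sequence of dense open sets
    obtain ⟨f, hf⟩ := (hSc.insert Set.univ).exists_eq_range (insert_nonempty _ _)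
    have hfo : ∀ n, IsOpen (f n) := by
      intro n
      have : f n ∈ insert Set.univ S := hf ▸ mem_range_self n
      rcases this with h' | h'
      · rw [h']; exact isOpen_univ
      · exact hSo _ h'
    have hfd : ∀ n, Dense (f n) := by
      intro n
      have : f n ∈ insert Set.univ S := hf ▸ mem_range_self n
      rcases this with h' | h'
      · rw [h']; exact dense_univ
      · exact hSd _ h'
    have hfA : (⋂ n, f n) ⊆ A := by
      intro x hx
      refine hSA (fun t ht => ?_)
      have : t ∈ insert Set.univ S := mem_insert_of_mem _ ht
      rw [hf] at this
      rcases this with ⟨n, rfl⟩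
      exact mem_iInter.1 hx n
    -- intersected dense open sets
    set D : ℕ → Set (ℕ → Bool) := fun n => ⋂ j ∈ Finset.range (n + 1), f j with hD
    have hDo : ∀ n, IsOpen (D n) := fun n =>
      isOpen_biInter_finset (fun i _ => hfo i)
    have hDd : ∀ n, Dense (D n) := fun n => dense_biInter_finset hfo hfd _
    obtain ⟨m, sel, hm, hsel⟩ := exists_sel hDo hDd
    have hmmono : StrictMono m := strictMono_nat_of_lt_succ hm
    refine ⟨fun n => Finset.Ico (m n) (m (n + 1)), fun n => Finset.nonempty_Ico.2 (hm n),
      ?_, ?_⟩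
    · intro n i hi j hj
      rw [Finset.mem_Ico] at hi hj
      exact lt_of_lt_of_le hi.2 hj.1
    · intro u hu
      set p : ℕ → Prop := fun n => ∀ i ∈ Finset.Ico (m n) (m (n + 1)), u i = true with hp
      have hpu : {n | p n}.Infinite := hu
      set nk : ℕ → ℕ := fun k => Nat.nth p k with hnk
      have hnkmono : StrictMono nk := Nat.nth_strictMono hpu
      have hnkmem : ∀ k, p (nk k) := Nat.nth_mem_of_infinite hpu
      -- the recursive modifications
      set w : ℕ → (ℕ → Bool) := fun k => Nat.rec u
        (fun k wk i => if m (nk k) ≤ i ∧ i < m (nk k + 1) then sel (nk k) wk i else wk i) k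
        with hw
      have hwsucc : ∀ k i, w (k + 1) i =
          if m (nk k) ≤ i ∧ i < m (nk k + 1) then sel (nk k) (w k) i else w k i :=
        fun k i => rfl
      set v : ℕ → Bool := fun i => w (i + 1) i with hv
      -- stabilization
      have stab : ∀ k j, k ≤ j → ∀ i, i < m (nk k) → w j i = w k i := by
        intro k j hkj
        induction j, hkj using Nat.le_induction with
        | base => intro i _; rfl
        | succ j hkj ih =>
          intro i hi
          rw [hwsucc]
          have : ¬(m (nk j) ≤ i ∧ i < m (nk j + 1)) := by
            rintro ⟨h1, -⟩
            exact absurd (lt_of_lt_of_le hi (hmmono.monotone (hnkmono.monotone hkj)))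
              (not_lt.2 h1)
          rw [if_neg this]
          exact ih i hi
      have hveq : ∀ k i, i < m (nk k) → v i = w k i := by
        intro k i hi
        have hlt : i < m (nk (i + 1)) :=
          lt_of_lt_of_le (Nat.lt_succ_self i)
            (le_trans hnkmono.le_apply hmmono.le_apply)
        rcases le_total k (i + 1) with h' | h'
        · exact stab k (i + 1) h' i hi
        · exact (stab (i + 1) k h' i hlt).symm
      -- v ≤ u
      have hvu : ∀ i, v i = true → u i = true := by
        have : ∀ k i, w k i = true → u i = true := by
          intro k
          induction k with
          | zero => intro i hi; exact hi
          | succ k ih =>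
            intro i hi
            rw [hwsucc] at hi
            by_cases hc : m (nk k) ≤ i ∧ i < m (nk k + 1)
            · exact hnkmem k i (Finset.mem_Ico.2 hc)
            · rw [if_neg hc] at hi; exact ih i hi
        intro i hi
        exact this (i + 1) i hi
      -- v is in every f j
      have hvf : v ∈ ⋂ n, f n := by
        rw [mem_iInter]
        intro j
        have hjle : j ≤ nk j := hnkmono.le_apply
        have hvD : v ∈ D (nk j) := by
          refine (hsel (nk j) (w j)).2 v ?_
          intro i hi
          have hi' : i < m (nk (j + 1)) :=
            lt_of_lt_of_le hi (hmmono.monotone (Nat.succ_le_of_lt (hnkmono (Nat.lt_succ_self j))))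
          rw [hveq (j + 1) i hi', hwsucc]
          by_cases hc : m (nk j) ≤ i
          · rw [if_pos ⟨hc, hi⟩]
          · rw [if_neg (fun hx => hc hx.1)]
            exact ((hsel (nk j) (w j)).1 i (not_le.1 hc)).symm
        have : D (nk j) ⊆ f j := by
          intro x hx
          exact mem_iInter₂.1 hx j (Finset.mem_range.2 (Nat.lt_succ_of_le hjle))
        exact this hvD
      exact hup v u (hfA hvf) hvu
  · -- reverse direction
    rintro ⟨I, hne, hsucc, hA⟩
    have hlb : ∀ n, ∀ i ∈ I n, n ≤ i := by
      intro n
      induction n with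
      | zero => intro i _; exact Nat.zero_le i
      | succ n ih =>
        intro i hi
        obtain ⟨j, hj⟩ := hne n
        exact Nat.succ_le_of_lt (lt_of_le_of_lt (ih j hj) (hsucc n j hj i hi))
    set C : ℕ → Set (ℕ → Bool) := fun n => {u | ∀ i ∈ I n, u i = true} with hC
    have hCo : ∀ n, IsOpen (C n) := by
      intro n
      have h : C n = Set.pi (I n : Set ℕ) (fun _ => {true}) := by
        ext u; simp [hC, Set.mem_pi]
      rw [h]
      exact isOpen_set_pi (I n).finite_toSet (fun a _ => isOpen_discrete _)
    set U : ℕ → Set (ℕ → Bool) := fun N => ⋃ n, ⋃ (_ : N ≤ n), C n with hU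
    have hUo : ∀ N, IsOpen (U N) := fun N =>
      isOpen_iUnion (fun n => isOpen_iUnion (fun _ => hCo n))
    have hUd : ∀ N, Dense (U N) := by
      intro N
      rw [dense_iff_inter_open]
      intro V hV ⟨x, hx⟩
      rcases isOpen_pi_iff.1 hV x hx with ⟨J, uu, h1, h2⟩
      set n := max (J.sup id + 1) N with hn
      set y : ℕ → Bool := fun i => if i ∈ I n then true else x i with hy
      have hyV : y ∈ V := by
        refine h2 ?_
        intro a ha
        have haJ : a ∈ J := ha
        have : a ∉ I n := by
          intro hmem
          have h3 : n ≤ a := hlb n a hmem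
          have h4 : a ≤ J.sup id := Finset.le_sup (f := id) haJ
          omega
        have : y a = x a := by simp [hy, this]
        rw [this]
        exact (h1 a haJ).2
      refine ⟨y, hyV, ?_⟩
      rw [hU, Set.mem_iUnion]
      refine ⟨n, Set.mem_iUnion.2 ⟨le_max_right _ _, ?_⟩⟩
      intro i hi
      simp [hy, hi]
    have hsub : (⋂ N, U N) ⊆ A := by
      intro u hu
      refine hA u ?_
      refine Set.infinite_of_not_bddAbove ?_
      rintro ⟨b, hb⟩
      have := mem_iInter.1 hu (b + 1)
      rw [hU, Set.mem_iUnion] at this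
      obtain ⟨n, hn⟩ := this
      rw [Set.mem_iUnion] at hn
      obtain ⟨hbn, hCn⟩ := hn
      have : n ≤ b := hb hCn
      omega
    exact Filter.mem_of_superset (countable_iInter_mem.2 (fun N => residual_of_dense_open (hUo N) (hUd N))) hsub
end

section
/- Let φ : X → Y be a continuous map between topological spaces such that for every nonempty (basic) open set U ⊆ X, the closure of φ(U) is open in Y. Then for every nowhere dense set A ⊆ Y, the preimage φ^{-1}(A) is nowhere dense in X. -/
/-- If `φ` is continuous and there is a basis of open sets `U` with `closure (φ '' U)`
open, then preimages of nowhere dense sets are nowhere dense. -/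
theorem stmt_11 {X Y : Type*} [TopologicalSpace X] [TopologicalSpace Y]
    (φ : X → Y) (hφ : Continuous φ) (B : Set (Set X))
    (hB : TopologicalSpace.IsTopologicalBasis B)
    (hopen : ∀ U ∈ B, IsOpen (closure (φ '' U)))
    (A : Set Y) (hA : IsNowhereDense A) :
    IsNowhereDense (φ ⁻¹' A) := by
  rw [IsNowhereDense, Set.eq_empty_iff_forall_notMem]
  intro x hx
  -- get a basic open set U with x ∈ U ⊆ closure (φ ⁻¹' A)
  obtain ⟨U, hUB, hxU, hUsub⟩ := hB.exists_subset_of_mem_open hx isOpen_interior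
  have hUc : U ⊆ closure (φ ⁻¹' A) := hUsub.trans interior_subset
  set W := closure (φ '' U) with hW
  have hWopen : IsOpen W := hopen U hUB
  -- W is not contained in closure A
  have hWnotsub : ¬ W ⊆ closure A := by
    intro h
    have h2 : W ⊆ interior (closure A) := hWopen.subset_interior_iff.mpr h
    rw [hA] at h2
    exact h2 (subset_closure ⟨x, hxU, rfl⟩)
  obtain ⟨y, hyW, hynA⟩ := Set.not_subset.mp hWnotsub
  -- W \ closure A is open and meets φ '' U
  have hopen' : IsOpen (W \ closure A) := hWopen.sdiff isClosed_closure
  have hmeets : ((W \ closure A) ∩ (φ '' U)).Nonempty := by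
    have := (mem_closure_iff.mp hyW) _ hopen' ⟨hyW, hynA⟩
    exact this
  obtain ⟨z, hzWA, x', hx'U, hx'z⟩ := hmeets
  -- consider the open set O = U ∩ φ ⁻¹' (closure A)ᶜ, nonempty, inside closure (φ⁻¹'A)
  have hOopen : IsOpen (U ∩ φ ⁻¹' (closure A)ᶜ) :=
    (hB.isOpen hUB).inter (isClosed_closure.isOpen_compl.preimage hφ)
  have hx'O : x' ∈ U ∩ φ ⁻¹' (closure A)ᶜ := ⟨hx'U, by simp [hx'z, hzWA.2]⟩
  have hx'cl : x' ∈ closure (φ ⁻¹' A) := hUc hx'U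
  obtain ⟨w, hwO, hwA⟩ := (mem_closure_iff.mp hx'cl) _ hOopen hx'O
  exact hwO.2 (subset_closure hwA)
end

section
/- Every subset of Cantor space 2^ω with the Baire property that is invariant under all finitely supported permutations of ω (acting on subsets of ω by taking images) is either meager or comeager. -/
open Set Topology Filter

/-- The block-swap function: swaps `i ↔ i + t` for `i < n`. -/
def bsFun (n t m : ℕ) : ℕ :=
  if m < n then m + t else if t ≤ m ∧ m < t + n then m - t else m

lemma bsFun_invol {n t : ℕ} (hnt : n ≤ t) (m : ℕ) : bsFun n t (bsFun n t m) = m := by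
  unfold bsFun
  split_ifs <;> omega

/-- The block-swap permutation. -/
def blockSwap (n t : ℕ) (hnt : n ≤ t) : Equiv.Perm ℕ :=
  Function.Involutive.toPerm (bsFun n t) (bsFun_invol hnt)

lemma blockSwap_apply_lt {n t : ℕ} (hnt : n ≤ t) {i : ℕ} (hi : i < n) :
    blockSwap n t hnt i = i + t := by
  simp [blockSwap, Function.Involutive.toPerm, bsFun, hi]

lemma blockSwap_support {n t : ℕ} (hnt : n ≤ t) :
    {m : ℕ | blockSwap n t hnt m ≠ m}.Finite := by
  apply (Set.finite_Iio (t + n)).subset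
  intro m hm
  simp only [mem_setOf_eq, blockSwap, Function.Involutive.toPerm, Equiv.coe_fn_mk, bsFun] at hm
  by_contra h
  simp only [mem_Iio, not_lt] at h
  rw [if_neg (by omega), if_neg (by omega)] at hm
  exact hm rfl

/-- The homeomorphism of Cantor space induced by a permutation of coordinates. -/
def permHomeo (σ : Equiv.Perm ℕ) : (ℕ → Bool) ≃ₜ (ℕ → Bool) where
  toFun u := fun m => u (σ m)
  invFun u := fun m => u (σ.symm m)
  left_inv u := by funext m; simp
  right_inv u := by funext m; simp
  continuous_toFun := continuous_pi fun m => continuous_apply _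
  continuous_invFun := continuous_pi fun m => continuous_apply _

/-- Every subset of Cantor space with the Baire property that is invariant under all
finitely supported permutations of `ω` is meager or comeager. -/
theorem stmt_13 (A : Set (ℕ → Bool)) (hA : BaireMeasurableSet A)
    (hinv : ∀ σ : Equiv.Perm ℕ, {n : ℕ | σ n ≠ n}.Finite →
      ∀ u : ℕ → Bool, u ∈ A ↔ (fun n => u (σ.symm n)) ∈ A) :
    IsMeagre A ∨ IsMeagre Aᶜ := by
  obtain ⟨U, hUopen, hAU⟩ := hA.residualEq_isOpen
  -- the symmetric difference pieces are meager
  have hdiff : IsMeagre ((A \ U) ∪ (U \ A)) := by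
    rw [IsMeagre]
    apply Filter.mem_of_superset hAU
    intro x hx
    simp only [mem_setOf_eq] at hx
    have hx' : x ∈ A ↔ x ∈ U := iff_of_eq hx
    simp only [mem_compl_iff, mem_union, mem_diff, not_or, not_and, not_not]
    exact ⟨fun h => hx'.mp h, fun h => hx'.mpr h⟩
  rcases eq_empty_or_nonempty U with rfl | ⟨v, hv⟩
  · left
    apply hdiff.mono
    intro x hx
    exact Or.inl ⟨hx, notMem_empty x⟩
  · right
    -- find a basic cylinder inside U
    obtain ⟨I, w, hw, hIU⟩ := isOpen_pi_iff.mp hUopen v hv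
    set n : ℕ := (I.sup id) + 1 with hn
    have hIn : ∀ i ∈ I, i < n := fun i hi => Nat.lt_succ_of_le (Finset.le_sup (f := id) hi)
    -- the translated cylinders
    set C : ℕ → Set (ℕ → Bool) := fun k => {u | ∀ i < n, u (i + (k + 1) * n) = v i} with hC
    have hC0 : {u : ℕ → Bool | ∀ i < n, u i = v i} ⊆ U := by
      intro u hu
      apply hIU
      intro i hi
      rw [hu i (hIn i hi)]
      exact (hw i hi).2
    -- C0 \ A meager
    have hC0A : IsMeagre ({u : ℕ → Bool | ∀ i < n, u i = v i} \ A) := by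
      apply hdiff.mono
      intro u hu
      exact Or.inr ⟨hC0 hu.1, hu.2⟩
    -- each Aᶜ ∩ C k is meager
    have hCk : ∀ k, IsMeagre (Aᶜ ∩ C k) := by
      intro k
      have hnt : n ≤ (k + 1) * n := Nat.le_mul_of_pos_left n (Nat.succ_pos k)
      set σ := blockSwap n ((k + 1) * n) hnt with hσ
      set f : (ℕ → Bool) → (ℕ → Bool) := fun u => fun m => u (σ m) with hf
      have hfc : Continuous f := continuous_pi fun m => continuous_apply _
      have hfo : IsOpenMap f := (permHomeo σ).isOpenMap
      have key : Aᶜ ∩ C k ⊆ f ⁻¹' ({u : ℕ → Bool | ∀ i < n, u i = v i} \ A) := by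
        intro u ⟨huA, huC⟩
        constructor
        · intro i hi
          simp only [f, mem_setOf_eq]
          rw [blockSwap_apply_lt hnt hi]
          exact huC i hi
        · intro hfu
          apply huA
          have h2 := (hinv σ (blockSwap_support hnt) (f u)).mp hfu
          have h3 : (fun m => f u (σ.symm m)) = u := by
            funext m
            simp only [f, Equiv.apply_symm_apply]
          rwa [h3] at h2
      exact (hC0A.preimage_of_isOpenMap hfc hfo).mono key
    -- the complement of the union of cylinders is meager
    have hD : IsMeagre (⋃ k, C k)ᶜ := by
      rw [IsMeagre, compl_compl]
      apply residual_of_dense_open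
      · apply isOpen_iUnion
        intro k
        have hCeq : C k = ⋂ i ∈ Finset.range n, {u : ℕ → Bool | u (i + (k + 1) * n) = v i} := by
          ext u
          simp [C]
        rw [hCeq]
        apply isOpen_biInter_finset
        intro i _
        show IsOpen ((fun u : ℕ → Bool => u (i + (k + 1) * n)) ⁻¹' {v i})
        exact IsOpen.preimage (continuous_apply (i + (k + 1) * n))
          (isOpen_discrete ({v i} : Set Bool))
      · rw [dense_iff_inter_open]
        rintro O hO ⟨x, hx⟩
        obtain ⟨J, y, hy, hJO⟩ := isOpen_pi_iff.mp hO x hx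
        set k : ℕ := J.sup id + 1 with hk
        set z : ℕ → Bool := fun m =>
          if (k + 1) * n ≤ m ∧ m < (k + 1) * n + n then v (m - (k + 1) * n) else x m with hz
        refine ⟨z, ?_, ?_⟩
        · apply hJO
          intro j hj
          have hjk : j < (k + 1) * n ∨ n = 0 := by
            rcases Nat.eq_zero_or_pos n with h0 | h0
            · exact Or.inr h0
            · left
              have hle : j ≤ J.sup id := Finset.le_sup (f := id) hj
              calc j ≤ J.sup id := hle
                _ < (k + 1) * 1 := by omega
                _ ≤ (k + 1) * n := Nat.mul_le_mul_left _ h0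
          have hzx : z j = x j := by
            rcases hjk with h | h
            · simp only [z]; rw [if_neg (by omega)]
            · simp only [z]; rw [if_neg (by omega)]
          rw [hzx]
          exact (hy j hj).2
        · apply mem_iUnion.mpr
          exact ⟨k, fun i hi => by
            simp only [z, C, mem_setOf_eq]
            rw [if_pos (by constructor <;> omega)]
            congr 1
            omega⟩
    -- conclude
    have hsub : Aᶜ ⊆ (⋃ k, C k)ᶜ ∪ ⋃ k, (Aᶜ ∩ C k) := by
      intro u hu
      by_cases h : u ∈ ⋃ k, C k
      · right
        obtain ⟨k, hk⟩ := mem_iUnion.mp h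
        exact mem_iUnion.mpr ⟨k, hu, hk⟩
      · exact Or.inl h
    have hunion : IsMeagre ((⋃ k, C k)ᶜ ∪ ⋃ k, (Aᶜ ∩ C k)) := by
      rw [IsMeagre, compl_union]
      exact Filter.inter_mem hD (isMeagre_iUnion hCk)
    exact hunion.mono hsub
end

section
/- Let E be a meager equivalence relation on a nonempty perfect Polish space P (meager as a subset of P × P). Then there exists a nonempty perfect compact subset K ⊆ P (homeomorphic to the Cantor set) such that no two distinct elements of K are E-equivalent. -/
open Set Metric Filter

/-- Enumerate all boolean lists of a given length. -/
def KMboolLists : ℕ → List (List Bool)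
  | 0 => [[]]
  | n + 1 => (KMboolLists n).flatMap fun l => [false :: l, true :: l]

lemma KM_mem_boolLists : ∀ (n : ℕ) (l : List Bool), l.length = n → l ∈ KMboolLists n := by
  intro n
  induction n with
  | zero => intro l hl; rw [List.length_eq_zero_iff] at hl; simp [hl, KMboolLists]
  | succ n ih =>
    intro l hl
    cases l with
    | nil => simp at hl
    | cons a l' =>
      simp only [List.length_cons, Nat.succ.injEq] at hl
      simp only [KMboolLists, List.mem_flatMap]
      exact ⟨l', ih l' hl, by cases a <;> simp⟩

/-- A meagre set is covered by a monotone sequence of closed sets with dense complements. -/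
lemma KM_meagre_cover {X : Type*} [TopologicalSpace X] {s : Set X} (h : IsMeagre s) :
    ∃ F : ℕ → Set X, (∀ n, IsClosed (F n)) ∧ (∀ n, Dense (F n)ᶜ) ∧ Monotone F ∧
      s ⊆ ⋃ n, F n := by
  obtain ⟨S, hS, hc, hsub⟩ := isMeagre_iff_countable_union_isNowhereDense.mp h
  obtain ⟨f, hf⟩ := (hc.insert ∅).exists_eq_range (Set.insert_nonempty _ _)
  have hfnd : ∀ n, IsNowhereDense (f n) := by
    intro n
    have : f n ∈ insert ∅ S := hf ▸ Set.mem_range_self n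
    rcases this with h' | h'
    · rw [h']; exact isNowhereDense_empty
    · exact hS _ h'
  refine ⟨fun n => ⋃ k ∈ Finset.range (n + 1), closure (f k), ?_, ?_, ?_, ?_⟩
  · intro n
    exact Set.Finite.isClosed_biUnion (Finset.finite_toSet _) fun k _ => isClosed_closure
  · intro n
    induction n with
    | zero =>
      simp only [Finset.range_one, Finset.mem_singleton, Set.iUnion_iUnion_eq_left,
        zero_add]
      exact (isClosed_isNowhereDense_iff_compl.mp ⟨isClosed_closure, (hfnd 0).closure⟩).2
    | succ n ihn =>
      simp only [] at ihn ⊢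
      have : (⋃ k ∈ Finset.range (n + 1 + 1), closure (f k)) =
          closure (f (n + 1)) ∪ ⋃ k ∈ Finset.range (n + 1), closure (f k) := by
        rw [Finset.range_add_one, Finset.set_biUnion_insert]
      rw [show (n+1+1) = (n+1)+1 from rfl, this, Set.compl_union]
      have hd : Dense (closure (f (n + 1)))ᶜ :=
        (isClosed_isNowhereDense_iff_compl.mp ⟨isClosed_closure, (hfnd (n + 1)).closure⟩).2
      exact hd.inter_of_isOpen_left ihn isClosed_closure.isOpen_compl
  · intro m n hmn
    intro x hx
    simp only [Set.mem_iUnion, Finset.mem_range] at hx ⊢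
    obtain ⟨k, hk, hxk⟩ := hx
    exact ⟨k, by omega, hxk⟩
  · intro x hx
    obtain ⟨t, htS, hxt⟩ := hsub hx
    have : t ∈ Set.range f := hf ▸ Set.mem_insert_of_mem _ htS
    obtain ⟨n, rfl⟩ := this
    exact Set.mem_iUnion.mpr ⟨n, Set.mem_biUnion (Finset.self_mem_range_succ n)
      (subset_closure hxt)⟩

open Set Metric Filter

/-- Shrink a finite family of nonempty open sets so that for each listed pair of distinct
indices, the product of the closures avoids the closed set `G` (with dense complement). -/
lemma KM_shrink_pairs {X : Type*} [MetricSpace X] {G : Set (X × X)}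
    (hGc : IsClosed G) (hGd : Dense Gᶜ) {ι : Type*} [DecidableEq ι]
    (L : List (ι × ι)) (W : ι → Set X) (hW : ∀ i, IsOpen (W i) ∧ (W i).Nonempty) :
    ∃ V : ι → Set X, (∀ i, IsOpen (V i) ∧ (V i).Nonempty ∧ V i ⊆ W i) ∧
      ∀ p ∈ L, p.1 ≠ p.2 → Disjoint (closure (V p.1) ×ˢ closure (V p.2)) G := by
  induction L with
  | nil => exact ⟨W, fun i => ⟨(hW i).1, (hW i).2, subset_rfl⟩, by simp⟩
  | cons p L ih =>
    obtain ⟨V, hV1, hV2⟩ := ih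
    by_cases hp : p.1 = p.2
    · refine ⟨V, hV1, ?_⟩
      intro q hq hne
      rcases List.mem_cons.mp hq with rfl | hq
      · exact absurd hp hne
      · exact hV2 q hq hne
    · -- find a point of (V p.1 ×ˢ V p.2) outside G
      have hopen : IsOpen (V p.1 ×ˢ V p.2) := ((hV1 p.1).1).prod ((hV1 p.2).1)
      have hne : (V p.1 ×ˢ V p.2).Nonempty := ((hV1 p.1).2.1).prod ((hV1 p.2).2.1)
      obtain ⟨z, hzV, hzG⟩ := hGd.inter_open_nonempty _ hopen hne
      obtain ⟨x, y⟩ := z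
      -- a radius working for everything
      obtain ⟨r₁, hr₁, hball₁⟩ := Metric.isOpen_iff.mp hGc.isOpen_compl _ hzG
      obtain ⟨r₂, hr₂, hball₂⟩ := Metric.isOpen_iff.mp (hV1 p.1).1 x hzV.1
      obtain ⟨r₃, hr₃, hball₃⟩ := Metric.isOpen_iff.mp (hV1 p.2).1 y hzV.2
      set r : ℝ := min r₁ (min r₂ r₃) / 2 with hrdef
      have hrpos : 0 < r := by positivity
      have hrlt₁ : r < r₁ := by
        have : min r₁ (min r₂ r₃) ≤ r₁ := min_le_left _ _
        rw [hrdef]; linarith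
      have hrlt₂ : r < r₂ := by
        have : min r₁ (min r₂ r₃) ≤ r₂ := le_trans (min_le_right _ _) (min_le_left _ _)
        rw [hrdef]; linarith
      have hrlt₃ : r < r₃ := by
        have : min r₁ (min r₂ r₃) ≤ r₃ := le_trans (min_le_right _ _) (min_le_right _ _)
        rw [hrdef]; linarith
      set V' : ι → Set X :=
        Function.update (Function.update V p.1 (Metric.ball x r)) p.2 (Metric.ball y r)
        with hV'def
      have hV'1 : V' p.1 = Metric.ball x r := by
        rw [hV'def, Function.update_of_ne hp, Function.update_self]
      have hV'2 : V' p.2 = Metric.ball y r := by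
        rw [hV'def, Function.update_self]
      have hV'sub : ∀ i, V' i ⊆ V i := by
        intro i
        by_cases h1 : i = p.1
        · subst h1; rw [hV'1]
          exact (Metric.ball_subset_ball hrlt₂.le).trans hball₂
        by_cases h2 : i = p.2
        · subst h2; rw [hV'2]
          exact (Metric.ball_subset_ball hrlt₃.le).trans hball₃
        · rw [hV'def, Function.update_of_ne h2, Function.update_of_ne h1]
      have hV'open : ∀ i, IsOpen (V' i) := by
        intro i
        by_cases h2 : i = p.2
        · subst h2; rw [hV'2]; exact Metric.isOpen_ball
        by_cases h1 : i = p.1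
        · subst h1; rw [hV'1]; exact Metric.isOpen_ball
        · rw [hV'def, Function.update_of_ne h2, Function.update_of_ne h1]
          exact (hV1 i).1
      have hV'ne : ∀ i, (V' i).Nonempty := by
        intro i
        by_cases h2 : i = p.2
        · subst h2; rw [hV'2]; exact ⟨y, Metric.mem_ball_self hrpos⟩
        by_cases h1 : i = p.1
        · subst h1; rw [hV'1]; exact ⟨x, Metric.mem_ball_self hrpos⟩
        · rw [hV'def, Function.update_of_ne h2, Function.update_of_ne h1]
          exact (hV1 i).2.1
      refine ⟨V', fun i => ⟨hV'open i, hV'ne i, (hV'sub i).trans (hV1 i).2.2⟩, ?_⟩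
      intro q hq hqne
      rcases List.mem_cons.mp hq with rfl | hq
      · -- the new pair
        rw [Set.disjoint_left]
        rintro ⟨a, b⟩ ⟨ha, hb⟩ habG
        have ha' : a ∈ Metric.closedBall x r := by
          have := closure_mono (le_of_eq hV'1) ha
          exact Metric.closure_ball_subset_closedBall this
        have hb' : b ∈ Metric.closedBall y r := by
          have := closure_mono (le_of_eq hV'2) hb
          exact Metric.closure_ball_subset_closedBall this
        have : (a, b) ∈ Metric.ball (x, y) r₁ := by
          rw [Metric.mem_ball, Prod.dist_eq]
          exact max_lt (lt_of_le_of_lt (Metric.mem_closedBall.mp ha') hrlt₁)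
            (lt_of_le_of_lt (Metric.mem_closedBall.mp hb') hrlt₁)
        exact hball₁ this habG
      · exact Disjoint.mono_left
          (Set.prod_mono (closure_mono (hV'sub q.1)) (closure_mono (hV'sub q.2)))
          (hV2 q hq hqne)
open Set Metric Filter

lemma KM_diam_closedBall_le {X : Type*} [MetricSpace X] (x : X) {r ε : ℝ}
    (h : 2 * r ≤ ε) : EMetric.diam (Metric.closedBall x r) ≤ ENNReal.ofReal ε := by
  apply EMetric.diam_le
  intro a ha b hb
  rw [edist_dist]
  apply ENNReal.ofReal_le_ofReal
  have h1 : dist a x ≤ r := Metric.mem_closedBall.mp ha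
  have h2 : dist b x ≤ r := Metric.mem_closedBall.mp hb
  have := dist_triangle_right a b x
  linarith

/-- One-step refinement for the Kuratowski–Mycielski scheme. -/
lemma KM_step {X : Type*} [MetricSpace X] [Nonempty X]
    (hiso : ∀ x : X, Filter.NeBot (nhdsWithin x {x}ᶜ))
    {G : Set (X × X)} (hGc : IsClosed G) (hGd : Dense Gᶜ)
    (n : ℕ) {ε : ℝ} (hε : 0 < ε) (W : List Bool → Set X)
    (hW : ∀ l, l.length = n → IsOpen (W l) ∧ (W l).Nonempty) :
    ∃ V : List Bool → Set X,
      (∀ l, IsOpen (V l) ∧ (V l).Nonempty) ∧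
      (∀ l (a : Bool), l.length = n → closure (V (a :: l)) ⊆ W l) ∧
      (∀ l, l.length = n + 1 → EMetric.diam (closure (V l)) ≤ ENNReal.ofReal ε) ∧
      (∀ l, l.length = n → Disjoint (closure (V (false :: l))) (closure (V (true :: l)))) ∧
      (∀ l l', l.length = n + 1 → l'.length = n + 1 → l ≠ l' →
        Disjoint (closure (V l) ×ˢ closure (V l')) G) := by
  -- Stage 1: split each set of length n into two small separated balls
  have key : ∀ l : List Bool, ∃ (p : Bool → X) (r : ℝ), 0 < r ∧ 2 * r ≤ ε ∧
      (l.length = n → (∀ a, Metric.closedBall (p a) r ⊆ W l) ∧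
        Disjoint (Metric.closedBall (p false) r) (Metric.closedBall (p true) r)) := by
    intro l
    by_cases hl : l.length = n
    · obtain ⟨hWo, x₀, hx₀⟩ := hW l hl
      have h1 : W l ∈ nhds x₀ := hWo.mem_nhds hx₀
      have h2 : (W l ∩ {x₀}ᶜ).Nonempty := by
        haveI := hiso x₀
        exact Filter.nonempty_of_mem
          (Filter.inter_mem (mem_nhdsWithin_of_mem_nhds h1) self_mem_nhdsWithin)
      obtain ⟨x₁, hx₁W, hx₁ne⟩ := h2
      have hne : x₀ ≠ x₁ := fun h => hx₁ne (h ▸ rfl)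
      obtain ⟨r₀, hr₀, hb₀⟩ := Metric.isOpen_iff.mp hWo x₀ hx₀
      obtain ⟨r₁, hr₁, hb₁⟩ := Metric.isOpen_iff.mp hWo x₁ hx₁W
      have hd : 0 < dist x₀ x₁ := dist_pos.mpr hne
      set r : ℝ := min (min (r₀ / 2) (r₁ / 2)) (min (dist x₀ x₁ / 3) (ε / 2)) with hr
      have hrpos : 0 < r := by positivity
      refine ⟨fun a => cond a x₁ x₀, r, hrpos, ?_, fun _ => ⟨?_, ?_⟩⟩
      · have : r ≤ ε / 2 := le_trans (min_le_right _ _) (min_le_right _ _)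
        linarith
      · intro a
        cases a
        · simp only [Bool.cond_false]
          refine subset_trans (Metric.closedBall_subset_ball ?_) hb₀
          calc r ≤ r₀ / 2 := le_trans (min_le_left _ _) (min_le_left _ _)
            _ < r₀ := by linarith
        · simp only [Bool.cond_true]
          refine subset_trans (Metric.closedBall_subset_ball ?_) hb₁
          calc r ≤ r₁ / 2 := le_trans (min_le_left _ _) (min_le_right _ _)
            _ < r₁ := by linarith
      · rw [Set.disjoint_left]
        intro z hz₀ hz₁
        simp only [Bool.cond_false, Bool.cond_true, Metric.mem_closedBall] at hz₀ hz₁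
        have h3 : r ≤ dist x₀ x₁ / 3 := le_trans (min_le_right _ _) (min_le_left _ _)
        have := dist_triangle x₀ z x₁
        rw [dist_comm x₀ z] at this
        linarith
    · exact ⟨fun _ => Classical.arbitrary X, ε / 2, by linarith, by linarith,
        fun h => absurd h hl⟩
  choose pt rad hrpos hrε hkey using key
  -- the stage-1 family
  set W₁ : List Bool → Set X := fun m =>
    match m with
    | [] => Set.univ
    | a :: l => Metric.ball (pt l a) (rad l) with hW₁
  have hW₁prop : ∀ m, IsOpen (W₁ m) ∧ (W₁ m).Nonempty := by
    intro m
    match m with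
    | [] => exact ⟨isOpen_univ, Set.univ_nonempty⟩
    | a :: l => exact ⟨Metric.isOpen_ball, ⟨_, Metric.mem_ball_self (hrpos l)⟩⟩
  -- Stage 2: shrink to avoid G on all pairs
  have hLlem := KM_mem_boolLists
  set L : List (List Bool × List Bool) :=
    (KMboolLists (n + 1)).flatMap fun l => (KMboolLists (n + 1)).map fun l' => (l, l') with hL
  have hmemL : ∀ l l' : List Bool, l.length = n + 1 → l'.length = n + 1 → (l, l') ∈ L := by
    intro l l' h h'
    rw [hL, List.mem_flatMap]
    exact ⟨l, KM_mem_boolLists _ _ h, List.mem_map.mpr ⟨l', KM_mem_boolLists _ _ h', rfl⟩⟩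
  obtain ⟨V, hV1, hV2⟩ := KM_shrink_pairs hGc hGd L W₁ hW₁prop
  have hVball : ∀ (a : Bool) (l : List Bool),
      closure (V (a :: l)) ⊆ Metric.closedBall (pt l a) (rad l) := by
    intro a l
    refine closure_minimal ?_ Metric.isClosed_closedBall
    exact ((hV1 (a :: l)).2.2).trans Metric.ball_subset_closedBall
  refine ⟨V, fun l => ⟨(hV1 l).1, (hV1 l).2.1⟩, ?_, ?_, ?_, ?_⟩
  · intro l a hl
    exact (hVball a l).trans ((hkey l hl).1 a)
  · intro l hl
    match l with
    | a :: l' =>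
      calc EMetric.diam (closure (V (a :: l')))
          ≤ EMetric.diam (Metric.closedBall (pt l' a) (rad l')) :=
            EMetric.diam_mono (hVball a l')
        _ ≤ ENNReal.ofReal ε := KM_diam_closedBall_le _ (hrε l')
  · intro l hl
    exact Set.disjoint_of_subset (hVball false l) (hVball true l) (hkey l hl).2
  · intro l l' h h' hne
    exact hV2 (l, l') (hmemL l l' h h') hne
open Set Metric Filter

/-- Construct the full Kuratowski–Mycielski scheme. -/
lemma KM_exists_scheme {X : Type*} [MetricSpace X] [Nonempty X]
    (hiso : ∀ x : X, Filter.NeBot (nhdsWithin x {x}ᶜ))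
    (F : ℕ → Set (X × X)) (hFc : ∀ n, IsClosed (F n)) (hFd : ∀ n, Dense (F n)ᶜ) :
    ∃ U : ℕ → List Bool → Set X,
      (∀ n l, IsOpen (U n l) ∧ (U n l).Nonempty) ∧
      (∀ n l (a : Bool), l.length = n → closure (U (n + 1) (a :: l)) ⊆ U n l) ∧
      (∀ n l, l.length = n + 1 →
        EMetric.diam (closure (U (n + 1) l)) ≤ ENNReal.ofReal ((1 / 2) ^ (n + 1))) ∧
      (∀ n l, l.length = n →
        Disjoint (closure (U (n + 1) (false :: l))) (closure (U (n + 1) (true :: l)))) ∧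
      (∀ n l l', l.length = n + 1 → l'.length = n + 1 → l ≠ l' →
        Disjoint (closure (U (n + 1) l) ×ˢ closure (U (n + 1) l')) (F n)) := by
  have hεpos : ∀ n : ℕ, (0 : ℝ) < (1 / 2) ^ (n + 1) := fun n => by positivity
  have step : ∀ n (W : List Bool → Set X), (∀ l, IsOpen (W l) ∧ (W l).Nonempty) →
      ∃ V : List Bool → Set X,
        (∀ l, IsOpen (V l) ∧ (V l).Nonempty) ∧
        (∀ l (a : Bool), l.length = n → closure (V (a :: l)) ⊆ W l) ∧
        (∀ l, l.length = n + 1 →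
          EMetric.diam (closure (V l)) ≤ ENNReal.ofReal ((1 / 2) ^ (n + 1))) ∧
        (∀ l, l.length = n →
          Disjoint (closure (V (false :: l))) (closure (V (true :: l)))) ∧
        (∀ l l', l.length = n + 1 → l'.length = n + 1 → l ≠ l' →
          Disjoint (closure (V l) ×ˢ closure (V l')) (F n)) := by
    intro n W hWprop
    exact KM_step hiso (hFc n) (hFd n) n (hεpos n) W (fun l _ => hWprop l)
  choose nxt hnxt using step
  let Urec : ∀ _ : ℕ, {W : List Bool → Set X // ∀ l, IsOpen (W l) ∧ (W l).Nonempty} :=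
    fun n => Nat.rec ⟨fun _ => Set.univ, fun _ => ⟨isOpen_univ, Set.univ_nonempty⟩⟩
      (fun m Wp => ⟨nxt m Wp.1 Wp.2, (hnxt m Wp.1 Wp.2).1⟩) n
  have hUrec : ∀ n, (Urec (n + 1)).1 = nxt n (Urec n).1 (Urec n).2 := fun n => rfl
  refine ⟨fun n => (Urec n).1, fun n => (Urec n).2, ?_, ?_, ?_, ?_⟩
  · intro n l a hl
    exact (hnxt n (Urec n).1 (Urec n).2).2.1 l a hl
  · intro n l hl
    exact (hnxt n (Urec n).1 (Urec n).2).2.2.1 l hl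
  · intro n l hl
    exact (hnxt n (Urec n).1 (Urec n).2).2.2.2.1 l hl
  · intro n l l' h h' hne
    exact (hnxt n (Urec n).1 (Urec n).2).2.2.2.2 l l' h h' hne
open Set Metric Filter CantorScheme

/-- Kuratowski–Mycielski: a meager equivalence relation on a nonempty perfect Polish
space admits a nonempty perfect compact set of pairwise inequivalent elements. -/
theorem stmt_14 {P : Type*} [TopologicalSpace P] [PolishSpace P] [Nonempty P]
    [PerfectSpace P] (E : P → P → Prop) (hE : Equivalence E)
    (hmeager : IsMeagre {p : P × P | E p.1 p.2}) :
    ∃ K : Set P, K.Nonempty ∧ IsCompact K ∧ Perfect K ∧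
      ∀ x ∈ K, ∀ y ∈ K, x ≠ y → ¬ E x y := by
  letI := TopologicalSpace.upgradeIsCompletelyMetrizable P
  obtain ⟨F, hFc, hFd, hFmono, hFcov⟩ := KM_meagre_cover hmeager
  have hiso : ∀ x : P, Filter.NeBot (nhdsWithin x {x}ᶜ) := fun x => by
    exact PerfectSpace.not_isolated x
  obtain ⟨U, hUprop, hUsub, hUdiam, hUdisj, hUG⟩ := KM_exists_scheme hiso F hFc hFd
  set A : List Bool → Set P := fun l => closure (U l.length l) with hAdef
  have hAclosed : ∀ l, IsClosed (A l) := fun l => isClosed_closure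
  have hAne : ∀ l, (A l).Nonempty := fun l => ((hUprop l.length l).2).closure
  have hAanti : CantorScheme.Antitone A := by
    intro l a
    exact (hUsub l.length l a rfl).trans subset_closure
  have hCA : ClosureAntitone A := hAanti.closureAntitone hAclosed
  have hVD : VanishingDiam A := by
    intro x
    have hb : ∀ n : ℕ, EMetric.diam (A (PiNat.res x (n + 1))) ≤
        ENNReal.ofReal ((1 / 2) ^ (n + 1)) := by
      intro n
      have h := hUdiam n (PiNat.res x (n + 1)) (PiNat.res_length x (n + 1))
      simp only [hAdef, PiNat.res_length]
      exact h
    have hu : Tendsto (fun n : ℕ => ENNReal.ofReal ((1 / 2) ^ n)) atTop (nhds 0) := by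
      have h0 : Tendsto (fun n : ℕ => ((1 : ℝ) / 2) ^ n) atTop (nhds 0) :=
        tendsto_pow_atTop_nhds_zero_of_lt_one (by norm_num) (by norm_num)
      simpa using ENNReal.tendsto_ofReal h0
    apply tendsto_of_tendsto_of_tendsto_of_le_of_le' tendsto_const_nhds hu
    · simp
    · rw [eventually_atTop]
      refine ⟨1, fun m hm => ?_⟩
      obtain ⟨n, rfl⟩ := Nat.exists_eq_succ_of_ne_zero (Nat.one_le_iff_ne_zero.mp hm)
      exact hb n
  have hdisj : CantorScheme.Disjoint A := by
    rintro l (a | a) (b | b) hab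
    · exact absurd rfl hab
    · exact hUdisj l.length l rfl
    · exact (hUdisj l.length l rfl).symm
    · exact absurd rfl hab
  have hdom : (inducedMap A).1 = Set.univ := hCA.map_of_vanishingDiam hVD hAne
  have hdom' : ∀ x : ℕ → Bool, x ∈ (inducedMap A).1 := fun x => by
    rw [hdom]; exact Set.mem_univ x
  set f : (ℕ → Bool) → P := fun x => (inducedMap A).2 ⟨x, hdom' x⟩ with hfdef
  have hfc : Continuous f :=
    hVD.map_continuous.comp (Continuous.subtype_mk continuous_id _)
  have hfi : Function.Injective f := by
    intro x y hxy
    simpa only [← Subtype.val_inj] using hdisj.map_injective hxy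
  have hmem : ∀ (x : ℕ → Bool) (n : ℕ), f x ∈ A (PiNat.res x n) := fun x n =>
    CantorScheme.map_mem ⟨x, hdom' x⟩ n
  -- no isolated points in Cantor space
  have hcantor : ∀ a : ℕ → Bool, Filter.NeBot (nhdsWithin a {a}ᶜ) := by
    intro a
    rw [← mem_closure_iff_nhdsWithin_neBot]
    set s : ℕ → (ℕ → Bool) := fun n => Function.update a n (!(a n)) with hs
    have hsne : ∀ n, s n ∈ ({a}ᶜ : Set (ℕ → Bool)) := by
      intro n h
      have h2 : s n n = a n := by rw [Set.mem_singleton_iff.mp h]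
      rw [hs] at h2
      simp only [Function.update_self] at h2
      exact (Bool.not_ne_self (a n)) h2
    have hst : Tendsto s atTop (nhds a) := by
      rw [tendsto_pi_nhds]
      intro i
      apply Tendsto.congr' (f₁ := fun _ => a i)
      · rw [eventuallyEq_iff_exists_mem]
        refine ⟨{n | i < n}, eventually_gt_atTop i, fun n hn => ?_⟩
        rw [hs]
        exact (Function.update_of_ne (fun h => by simp [h] at hn) _ _).symm
      · exact tendsto_const_nhds
    exact mem_closure_of_tendsto hst (Eventually.of_forall hsne)
  refine ⟨Set.range f, Set.range_nonempty f, isCompact_range hfc, ⟨?_, ?_⟩, ?_⟩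
  · exact (isCompact_range hfc).isClosed
  · -- preperfect
    rw [preperfect_iff_nhds]
    rintro x ⟨a, rfl⟩ V hV
    have hV' : f ⁻¹' V ∈ nhds a := hfc.continuousAt.preimage_mem_nhds hV
    haveI := hcantor a
    obtain ⟨b, hbV, hbne⟩ : ((f ⁻¹' V) ∩ {a}ᶜ).Nonempty :=
      Filter.nonempty_of_mem
        (Filter.inter_mem (mem_nhdsWithin_of_mem_nhds hV') self_mem_nhdsWithin)
    exact ⟨f b, ⟨hbV, Set.mem_range_self b⟩, fun h => hbne (hfi h)⟩
  · rintro x ⟨a, rfl⟩ y ⟨b, rfl⟩ hxy hExy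
    have hab : a ≠ b := fun h => hxy (by rw [h])
    obtain ⟨i, hi⟩ : ∃ i, a i ≠ b i := by
      by_contra h
      push_neg at h
      exact hab (funext h)
    obtain ⟨m, hm⟩ := Set.mem_iUnion.mp (hFcov (show ((f a, f b) : P × P) ∈ {p : P × P | E p.1 p.2} from hExy))
    set n := max m i with hn
    have hs : PiNat.res a (n + 1) ≠ PiNat.res b (n + 1) := fun h =>
      hi (PiNat.res_eq_res.mp h (Nat.lt_succ_of_le (le_max_right m i)))
    have hprod := hUG n (PiNat.res a (n + 1)) (PiNat.res b (n + 1))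
      (PiNat.res_length a (n + 1)) (PiNat.res_length b (n + 1)) hs
    have hxA : f a ∈ closure (U (n + 1) (PiNat.res a (n + 1))) := by
      have h := hmem a (n + 1)
      simpa only [hAdef, PiNat.res_length] using h
    have hyA : f b ∈ closure (U (n + 1) (PiNat.res b (n + 1))) := by
      have h := hmem b (n + 1)
      simpa only [hAdef, PiNat.res_length] using h
    exact Set.disjoint_left.mp hprod (Set.mk_mem_prod hxA hyA)
      (hFmono (le_max_left m i) hm)
end
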